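/- Let E be a separable real Banach space. Then for every f in the closed unit ball B_{E*} of the dual space E* there is a sequence (f_n)_{n≥1} of extreme points of B_{E*} such that (f_1+⋯+f_N)/N converges to f in the weak* topology of E*, i.e. for every x ∈ E, (1/N)·Σ_{k=1}^N f_k(x) → f(x) as N → ∞. -/

import Mathlib

open Filter Finset

open Metric Set NormedSpace

/-- Sum of a `Dm`-periodic function over `q` full periods. -/
lemma sum_range_mul_of_periodic (Dm : ℕ) (F : ℕ → ℝ) (hF : ∀ o, F o = F (o % Dm)) (q : ℕ) :
    ∑ o ∈ Finset.range (q * Dm), F o = q * ∑ i ∈ Finset.range Dm, F i := by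
  induction q with
  | zero => simp
  | succ q ih =>
    have hsplit : (q + 1) * Dm = q * Dm + Dm := by ring
    rw [hsplit, ← Finset.sum_range_add_sum_Ico F (Nat.le_add_right _ _), ih,
      Finset.sum_Ico_eq_sum_range]
    have : ∀ i ∈ Finset.range (q * Dm + Dm - q * Dm), F (q * Dm + i) = F i := by
      intro i hi
      simp only [Nat.add_sub_cancel_left] at hi
      rw [hF (q * Dm + i), Nat.mul_add_mod', Nat.mod_eq_of_lt (Finset.mem_range.1 hi)]
    rw [Finset.sum_congr rfl this]
    simp only [Nat.add_sub_cancel_left]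
    push_cast; ring

/-- Estimate for a partial cycle sum of a periodic bounded function. -/
lemma partial_block_est (Dm : ℕ) (hDm : 0 < Dm) (F : ℕ → ℝ) (hF : ∀ o, F o = F (o % Dm))
    {C : ℝ} (hC : ∀ o, |F o| ≤ C) (c : ℝ) (hc : |c| ≤ C) (s : ℕ) :
    |∑ o ∈ Finset.range s, F o - s * c| ≤
      (s : ℝ) * |(Dm : ℝ)⁻¹ * ∑ i ∈ Finset.range Dm, F i - c| + 2 * Dm * C := by
  set q := s / Dm with hq
  set r := s % Dm with hr
  have hs : q * Dm + r = s := by rw [hq, hr, Nat.mul_comm]; exact Nat.div_add_mod s Dm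
  have hrlt : r < Dm := Nat.mod_lt _ hDm
  have hsum : ∑ o ∈ Finset.range s, F o
      = (q : ℝ) * ∑ i ∈ Finset.range Dm, F i + ∑ i ∈ Finset.range r, F (q * Dm + i) := by
    rw [← hs, ← Finset.sum_range_add_sum_Ico F (Nat.le_add_right _ _),
      sum_range_mul_of_periodic Dm F hF q, Finset.sum_Ico_eq_sum_range]
    simp only [Nat.add_sub_cancel_left]
  have key : ∑ o ∈ Finset.range s, F o - (s : ℝ) * c
      = (q : ℝ) * Dm * ((Dm : ℝ)⁻¹ * ∑ i ∈ Finset.range Dm, F i - c)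
        + ∑ i ∈ Finset.range r, (F (q * Dm + i) - c) := by
    rw [hsum, Finset.sum_sub_distrib]
    have hDm' : (Dm : ℝ) ≠ 0 := Nat.cast_ne_zero.2 hDm.ne'
    have hscast : (s : ℝ) = (q : ℝ) * Dm + r := by rw [← hs]; push_cast; ring
    rw [hscast]
    rw [Finset.sum_const, Finset.card_range, nsmul_eq_mul]
    field_simp
    ring
  rw [key]
  have h1 : |(q : ℝ) * Dm * ((Dm : ℝ)⁻¹ * ∑ i ∈ Finset.range Dm, F i - c)|
      ≤ (s : ℝ) * |(Dm : ℝ)⁻¹ * ∑ i ∈ Finset.range Dm, F i - c| := by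
    rw [abs_mul]
    have hq1 : |(q : ℝ) * Dm| = (q : ℝ) * Dm := by
      rw [abs_of_nonneg]; positivity
    rw [hq1]
    apply mul_le_mul_of_nonneg_right _ (abs_nonneg _)
    have : (q * Dm : ℕ) ≤ s := by omega
    exact_mod_cast this
  have h2 : |∑ i ∈ Finset.range r, (F (q * Dm + i) - c)| ≤ 2 * Dm * C := by
    calc |∑ i ∈ Finset.range r, (F (q * Dm + i) - c)|
        ≤ ∑ i ∈ Finset.range r, |F (q * Dm + i) - c| := Finset.abs_sum_le_sum_abs _ _
      _ ≤ ∑ _i ∈ Finset.range r, (2 * C) := by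
          refine Finset.sum_le_sum fun i _ => ?_
          calc |F (q * Dm + i) - c| ≤ |F (q * Dm + i)| + |c| := abs_sub _ _
            _ ≤ C + C := add_le_add (hC _) hc
            _ = 2 * C := by ring
      _ = r * (2 * C) := by rw [Finset.sum_const, Finset.card_range]; simp
      _ ≤ Dm * (2 * C) := by
          have hC0 : 0 ≤ C := le_trans (abs_nonneg _) (hC 0)
          have : (r : ℝ) ≤ Dm := by exact_mod_cast hrlt.le
          nlinarith
      _ = 2 * Dm * C := by ring
  calc |_ + _| ≤ _ + _ := abs_add_le _ _
    _ ≤ _ := add_le_add h1 h2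

set_option maxHeartbeats 1000000 in
theorem exists_pattern {E : Type*} [NormedAddCommGroup E] [NormedSpace ℝ E]
    (f : StrongDual ℝ E) (hf : ‖f‖ ≤ 1) (s : Finset E) {ε : ℝ} (hε : 0 < ε) :
    ∃ (D : ℕ) (P : Fin D → StrongDual ℝ E), 0 < D ∧
      (∀ j, P j ∈ (closedBall (0 : StrongDual ℝ E) 1).extremePoints ℝ) ∧
      ∀ y ∈ s, |(D : ℝ)⁻¹ * (∑ j, P j y) - f y| < ε := by
  classical
  haveI : LocallyConvexSpace ℝ (WeakDual ℝ E) := WeakBilin.locallyConvexSpace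
  set ballW : Set (WeakDual ℝ E) := WeakDual.toStrongDual ⁻¹' closedBall (0 : StrongDual ℝ E) 1
    with hballW
  have hconv : Convex ℝ ballW :=
    by have h := (convex_closedBall (0 : StrongDual ℝ E) 1).linear_preimage
         (WeakDual.toStrongDual (𝕜 := ℝ) (E := E)).toLinearMap
       exact h
  have hcomp : IsCompact ballW := WeakDual.isCompact_closedBall (𝕜 := ℝ) (E := E) 0 1
  have hKM := closure_convexHull_extremePoints hcomp hconv
  have hf' : (StrongDual.toWeakDual f) ∈ ballW := by
    simp only [hballW, Set.mem_preimage, mem_closedBall, dist_zero_right]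
    exact hf
  rw [← hKM] at hf'
  set U : Set (WeakDual ℝ E) := {g | ∀ y ∈ s, |g y - f y| < ε / 2} with hU
  have hUopen : IsOpen U := by
    have : U = ⋂ y ∈ s, {g : WeakDual ℝ E | |g y - f y| < ε / 2} := by
      ext g; simp [hU]
    rw [this]
    refine isOpen_biInter_finset fun y _ => ?_
    have hc : Continuous fun g : WeakDual ℝ E => |g y - f y| :=
      ((WeakDual.eval_continuous y).sub continuous_const).abs
    exact isOpen_lt hc continuous_const
  have hfU : (StrongDual.toWeakDual f) ∈ U := by
    intro y _
    show |f y - f y| < ε / 2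
    simp only [sub_self, abs_zero]
    positivity
  obtain ⟨g, hgU, hgC⟩ := _root_.mem_closure_iff.1 hf' U hUopen hfU
  obtain ⟨ι, hι, w, z, hw0, hw1, hz, hzg⟩ := mem_convexHull_iff_exists_fintype.1 hgC
  letI := hι
  have hw1' : ∑ i, w i = 1 := hw1
  have hzg' : ∑ i, w i • z i = g := hzg
  clear hw1 hzg
  have hne : Nonempty ι := not_isEmpty_iff.1 fun h => by
    haveI := h
    rw [Finset.univ_eq_empty, Finset.sum_empty] at hw1'
    exact zero_ne_one hw1'
  obtain ⟨i0⟩ := hne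
  set k := Fintype.card ι with hk
  have hk0 : 0 < k := Fintype.card_pos_iff.2 ⟨i0⟩
  set B : ℝ := (∑ y ∈ s, ‖y‖) + 1 with hB
  have hB0 : 0 < B := by positivity
  have hyB : ∀ y ∈ s, ‖y‖ ≤ B := by
    intro y hy
    rw [hB]
    have : ‖y‖ ≤ ∑ y ∈ s, ‖y‖ := Finset.single_le_sum (fun y _ => norm_nonneg y) hy
    linarith
  obtain ⟨D, hDgt⟩ := exists_nat_gt (2 * k * B / (ε / 2))
  have hq0 : 0 < 2 * k * B / (ε / 2) := by positivity
  have hD0 : 0 < D := Nat.cast_pos.1 (hq0.trans hDgt)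
  have hDR : (0 : ℝ) < D := Nat.cast_pos.2 hD0
  set z' : ι → StrongDual ℝ E := fun i => WeakDual.toStrongDual (z i) with hz'
  have hzball : ∀ i, ‖z' i‖ ≤ 1 := by
    intro i
    have := extremePoints_subset (hz i)
    simpa only [hballW, Set.mem_preimage, mem_closedBall, dist_zero_right] using this
  have hzext : ∀ i, z' i ∈ (closedBall (0 : StrongDual ℝ E) 1).extremePoints ℝ := fun i => hz i
  have hzy : ∀ i (y : E), |(z' i) y| ≤ ‖y‖ := by
    intro i y
    have h1 : ‖(z' i) y‖ ≤ ‖z' i‖ * ‖y‖ := (z' i).le_opNorm y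
    rw [Real.norm_eq_abs] at h1
    nlinarith [hzball i, norm_nonneg y, norm_nonneg (z' i)]
  set a : Option ι → ℕ := fun p => p.elim (D - ∑ i, ⌊(D : ℝ) * w i⌋₊) fun i => ⌊(D : ℝ) * w i⌋₊
    with ha
  have hfloor_le : ∀ i, (⌊(D : ℝ) * w i⌋₊ : ℝ) ≤ (D : ℝ) * w i :=
    fun i => Nat.floor_le (mul_nonneg (Nat.cast_nonneg D) (hw0 i))
  have hfloorsum_le : (∑ i, ⌊(D : ℝ) * w i⌋₊) ≤ D := by
    have h1 : ((∑ i, ⌊(D : ℝ) * w i⌋₊ : ℕ) : ℝ) ≤ (D : ℝ) := by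
      push_cast
      calc ∑ i, (⌊(D : ℝ) * w i⌋₊ : ℝ) ≤ ∑ i, (D : ℝ) * w i :=
            Finset.sum_le_sum fun i _ => hfloor_le i
        _ = D := by rw [← Finset.mul_sum, hw1', mul_one]
    exact_mod_cast h1
  have hasum : ∑ p : Option ι, a p = D := by
    rw [Fintype.sum_option]
    simp only [ha, Option.elim]
    omega
  have hanone_eq : ((a none : ℕ) : ℝ) = (D : ℝ) - ∑ i, (⌊(D : ℝ) * w i⌋₊ : ℝ) := by
    simp only [ha, Option.elim]
    rw [Nat.cast_sub hfloorsum_le]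
    push_cast
    ring
  have hanone_le : ((a none : ℕ) : ℝ) ≤ k := by
    rw [hanone_eq]
    calc (D : ℝ) - ∑ i, (⌊(D : ℝ) * w i⌋₊ : ℝ)
        = ∑ i, ((D : ℝ) * w i - (⌊(D : ℝ) * w i⌋₊ : ℝ)) := by
          rw [Finset.sum_sub_distrib, ← Finset.mul_sum, hw1', mul_one]
      _ ≤ ∑ _i : ι, (1 : ℝ) := by
          refine Finset.sum_le_sum fun i _ => ?_
          have := Nat.lt_floor_add_one ((D : ℝ) * w i)
          linarith
      _ = k := by simp [hk]
  have hcard : Fintype.card ((p : Option ι) × Fin (a p)) = D := by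
    simp [Fintype.card_sigma, hasum]
  set e := Fintype.equivFinOfCardEq hcard with he
  set zz : Option ι → StrongDual ℝ E := fun p => p.elim (z' i0) z' with hzz
  refine ⟨D, fun j => zz (e.symm j).1, hD0, ?_, ?_⟩
  · intro j
    show zz (e.symm j).1 ∈ _
    rcases hp : (e.symm j).1 with _ | i
    · exact hzext i0
    · exact hzext i
  · intro y hy
    have hsum : (∑ j : Fin D, (zz (e.symm j).1) y) = ∑ p : Option ι, (a p : ℝ) * (zz p) y := by
      have h1 : ∑ j : Fin D, (zz (e.symm j).1) y
          = ∑ q : (p : Option ι) × Fin (a p), (zz q.1) y :=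
        Equiv.sum_comp e.symm fun q => (zz q.1) y
      rw [h1, ← Finset.univ_sigma_univ, Finset.sum_sigma]
      simp [Finset.sum_const, Finset.card_univ, nsmul_eq_mul]
    have hgval : (g y : ℝ) = ∑ i, w i * (z' i) y := by
      have h2 : WeakDual.toStrongDual g = ∑ i, w i • z' i := by
        rw [← hzg', map_sum]
        simp only [map_smul]
        rfl
      have h3 : (WeakDual.toStrongDual g) y = (∑ i, w i • z' i) y := by rw [h2]
      rw [ContinuousLinearMap.sum_apply] at h3
      simp only [ContinuousLinearMap.smul_apply, smul_eq_mul] at h3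
      exact h3
    have hgy : |g y - f y| < ε / 2 := hgU y hy
    have hdiff : (∑ p : Option ι, (a p : ℝ) * (zz p) y) - (D : ℝ) * (g y)
        = (a none : ℝ) * (z' i0) y
          + ∑ i, ((⌊(D : ℝ) * w i⌋₊ : ℝ) - (D : ℝ) * w i) * (z' i) y := by
      rw [Fintype.sum_option, hgval, Finset.mul_sum, add_sub_assoc, ← Finset.sum_sub_distrib]
      congr 1
      refine Finset.sum_congr rfl fun i _ => ?_
      show (⌊(D : ℝ) * w i⌋₊ : ℝ) * (z' i) y - (D : ℝ) * (w i * (z' i) y) = _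
      ring
    have hyB' : ‖y‖ ≤ B := hyB y hy
    have hest : |(∑ p : Option ι, (a p : ℝ) * (zz p) y) - (D : ℝ) * (g y)| ≤ 2 * k * B := by
      rw [hdiff]
      have h3 : |(a none : ℝ) * (z' i0) y| ≤ (a none : ℝ) * ‖y‖ := by
        rw [abs_mul, abs_of_nonneg (Nat.cast_nonneg _)]
        exact mul_le_mul_of_nonneg_left (hzy i0 y) (Nat.cast_nonneg _)
      have h4 : |∑ i, ((⌊(D : ℝ) * w i⌋₊ : ℝ) - (D : ℝ) * w i) * (z' i) y|
          ≤ (a none : ℝ) * ‖y‖ := by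
        calc |∑ i, ((⌊(D : ℝ) * w i⌋₊ : ℝ) - (D : ℝ) * w i) * (z' i) y|
            ≤ ∑ i, |((⌊(D : ℝ) * w i⌋₊ : ℝ) - (D : ℝ) * w i) * (z' i) y| :=
              Finset.abs_sum_le_sum_abs _ _
          _ ≤ ∑ i, ((D : ℝ) * w i - (⌊(D : ℝ) * w i⌋₊ : ℝ)) * ‖y‖ := by
              refine Finset.sum_le_sum fun i _ => ?_
              rw [abs_mul, abs_sub_comm, abs_of_nonneg (by linarith [hfloor_le i])]
              exact mul_le_mul_of_nonneg_left (hzy i y) (by linarith [hfloor_le i])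
          _ = (a none : ℝ) * ‖y‖ := by
              rw [← Finset.sum_mul, hanone_eq]
              congr 1
              rw [Finset.sum_sub_distrib]
              congr 1
              rw [← Finset.mul_sum, hw1', mul_one]
      calc |(a none : ℝ) * (z' i0) y
            + ∑ i, ((⌊(D : ℝ) * w i⌋₊ : ℝ) - (D : ℝ) * w i) * (z' i) y|
          ≤ |(a none : ℝ) * (z' i0) y|
            + |∑ i, ((⌊(D : ℝ) * w i⌋₊ : ℝ) - (D : ℝ) * w i) * (z' i) y| := abs_add_le _ _
        _ ≤ (a none : ℝ) * ‖y‖ + (a none : ℝ) * ‖y‖ := add_le_add h3 h4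
        _ ≤ (k : ℝ) * B + (k : ℝ) * B := by
            have h5 : (a none : ℝ) * ‖y‖ ≤ (k : ℝ) * B :=
              mul_le_mul hanone_le hyB' (norm_nonneg y) (Nat.cast_nonneg k)
            linarith
        _ = 2 * k * B := by ring
    have hfirst : |(D : ℝ)⁻¹ * (∑ j : Fin D, (zz (e.symm j).1) y) - g y| < ε / 2 := by
      have h6 : (D : ℝ)⁻¹ * (∑ j : Fin D, (zz (e.symm j).1) y) - g y
          = (D : ℝ)⁻¹ * ((∑ p : Option ι, (a p : ℝ) * (zz p) y) - (D : ℝ) * (g y)) := by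
        rw [hsum]
        field_simp
      have h8 : 2 * k * B < D * (ε / 2) := (div_lt_iff₀ (by positivity)).1 hDgt
      rw [h6, abs_mul, abs_of_nonneg (by positivity : (0:ℝ) ≤ (D : ℝ)⁻¹)]
      calc (D : ℝ)⁻¹ * |(∑ p : Option ι, (a p : ℝ) * (zz p) y) - (D : ℝ) * (g y)|
          ≤ (D : ℝ)⁻¹ * (2 * k * B) :=
            mul_le_mul_of_nonneg_left hest (by positivity)
        _ < (D : ℝ)⁻¹ * (D * (ε / 2)) := by
            exact mul_lt_mul_of_pos_left h8 (by positivity)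
        _ = ε / 2 := by field_simp
    calc |(D : ℝ)⁻¹ * (∑ j : Fin D, (zz (e.symm j).1) y) - f y|
        ≤ |(D : ℝ)⁻¹ * (∑ j : Fin D, (zz (e.symm j).1) y) - g y| + |g y - f y| := by
          have := abs_add_le ((D : ℝ)⁻¹ * (∑ j : Fin D, (zz (e.symm j).1) y) - g y) (g y - f y)
          simpa using this
      _ < ε / 2 + ε / 2 := add_lt_add hfirst hgy
      _ = ε := by ring

set_option maxHeartbeats 1000000 in
/-- Let `E` be a separable real Banach space.  For every
`f` in the closed unit ball of the dual `E*` there is a sequence of extreme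
points of the ball whose arithmetic means converge to `f` in the weak*
topology, i.e. pointwise on `E`. -/
theorem stmt11 {E : Type*} [NormedAddCommGroup E] [NormedSpace ℝ E] [CompleteSpace E]
    [TopologicalSpace.SeparableSpace E]
    (f : StrongDual ℝ E) (hf : ‖f‖ ≤ 1) :
    ∃ seq : ℕ → StrongDual ℝ E,
      (∀ n, seq n ∈ (Metric.closedBall (0 : StrongDual ℝ E) 1).extremePoints ℝ) ∧
      ∀ x : E,
        Tendsto (fun N : ℕ => (N : ℝ)⁻¹ * ∑ k ∈ Finset.range N, seq k x)
          atTop (nhds (f x)) := by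
  classical
  haveI : Nonempty E := ⟨0⟩
  set xs : ℕ → E := TopologicalSpace.denseSeq E with hxs
  have hdense : DenseRange xs := TopologicalSpace.denseRange_denseSeq E
  have H : ∀ m : ℕ, ∃ (D : ℕ) (P : Fin D → StrongDual ℝ E), 0 < D ∧
      (∀ j, P j ∈ (closedBall (0 : StrongDual ℝ E) 1).extremePoints ℝ) ∧
      ∀ i ∈ Finset.range (m+1), |(D : ℝ)⁻¹ * (∑ j, P j (xs i)) - f (xs i)| < 1/(m+1) := by
    intro m
    obtain ⟨D, P, h0, h1, h2⟩ := exists_pattern f hf ((Finset.range (m+1)).image xs)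
      (by positivity : (0:ℝ) < 1/(m+1))
    exact ⟨D, P, h0, h1, fun i hi => h2 _ (Finset.mem_image_of_mem xs hi)⟩
  choose D P hD hPext hPapp using H
  have hDR : ∀ m, (0:ℝ) < D m := fun m => Nat.cast_pos.2 (hD m)
  set avg : ℕ → StrongDual ℝ E := fun m => (D m : ℝ)⁻¹ • ∑ j, P m j with havgdef
  have havg_apply : ∀ m (y : E), avg m y = (D m : ℝ)⁻¹ * ∑ j, P m j y := by
    intro m y
    simp [havgdef, ContinuousLinearMap.sum_apply]
  have hPnorm : ∀ m j, ‖P m j‖ ≤ 1 := by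
    intro m j
    have := extremePoints_subset (hPext m j)
    simpa [mem_closedBall, dist_zero_right] using this
  have hPy : ∀ m j (y : E), |P m j y| ≤ ‖y‖ := by
    intro m j y
    have h1 := (P m j).le_opNorm y
    rw [Real.norm_eq_abs] at h1
    nlinarith [hPnorm m j, norm_nonneg y, norm_nonneg (P m j)]
  have havgy : ∀ m (y : E), |avg m y| ≤ ‖y‖ := by
    intro m y
    rw [havg_apply]
    have h1 : |∑ j, P m j y| ≤ (D m : ℝ) * ‖y‖ := by
      calc |∑ j, P m j y| ≤ ∑ j : Fin (D m), |P m j y| := Finset.abs_sum_le_sum_abs _ _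
        _ ≤ ∑ _j : Fin (D m), ‖y‖ := Finset.sum_le_sum fun j _ => hPy m j y
        _ = (D m : ℝ) * ‖y‖ := by
            rw [Finset.sum_const, Finset.card_univ, Fintype.card_fin, nsmul_eq_mul]
    rw [abs_mul, abs_of_nonneg (inv_nonneg.2 (hDR m).le)]
    calc (D m : ℝ)⁻¹ * |∑ j, P m j y| ≤ (D m : ℝ)⁻¹ * ((D m : ℝ) * ‖y‖) :=
          mul_le_mul_of_nonneg_left h1 (inv_nonneg.2 (hDR m).le)
      _ = ‖y‖ := by rw [← mul_assoc, inv_mul_cancel₀ (hDR m).ne', one_mul]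
  have hfy : ∀ y : E, |f y| ≤ ‖y‖ := by
    intro y
    have h1 := f.le_opNorm y
    rw [Real.norm_eq_abs] at h1
    nlinarith [norm_nonneg y]
  have havgtend : ∀ y : E, Tendsto (fun m => avg m y) atTop (nhds (f y)) := by
    intro y
    rw [Metric.tendsto_atTop]
    intro ε hε
    obtain ⟨i, hi⟩ := Metric.denseRange_iff.1 hdense y (ε/4) (by positivity)
    obtain ⟨M, hM⟩ := exists_nat_gt (4/ε)
    refine ⟨max i M, fun m hm => ?_⟩
    have him : i ≤ m := le_trans (le_max_left _ _) hm
    have hMm : M ≤ m := le_trans (le_max_right _ _) hm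
    have h1 : |avg m (xs i) - f (xs i)| < 1/(m+1) := by
      rw [havg_apply]
      exact hPapp m i (Finset.mem_range.2 (Nat.lt_succ_of_le him))
    have h2 : (1:ℝ)/(m+1) < ε/4 := by
      have hm1 : (4:ℝ)/ε < (m:ℝ)+1 := by
        refine hM.trans_le ?_
        have : (M:ℝ) ≤ (m:ℝ) := Nat.cast_le.2 hMm
        linarith
      have h3 : (4:ℝ) < ((m:ℝ)+1) * ε := (div_lt_iff₀ hε).1 hm1
      rw [div_lt_div_iff₀ (by positivity) (by norm_num : (0:ℝ) < 4)]
      nlinarith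
    have hdyi : ‖y - xs i‖ < ε/4 := by
      rw [← dist_eq_norm]; exact hi
    have e1 : avg m y - f y
        = avg m (y - xs i) + (avg m (xs i) - f (xs i)) + f (xs i - y) := by
      rw [map_sub, map_sub]
      ring
    rw [Real.dist_eq, e1]
    have h4 : |avg m (y - xs i)| ≤ ‖y - xs i‖ := havgy m _
    have h5 : |f (xs i - y)| ≤ ‖xs i - y‖ := hfy _
    rw [norm_sub_rev] at h5
    calc |avg m (y - xs i) + (avg m (xs i) - f (xs i)) + f (xs i - y)|
        ≤ |avg m (y - xs i) + (avg m (xs i) - f (xs i))| + |f (xs i - y)| := abs_add_le _ _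
      _ ≤ |avg m (y - xs i)| + |avg m (xs i) - f (xs i)| + |f (xs i - y)| :=
          add_le_add (abs_add_le _ _) le_rfl
      _ < ε/4 + ε/4 + ε/4 := by
          refine add_lt_add (add_lt_add ?_ (h1.trans h2)) ?_
          · exact lt_of_le_of_lt h4 hdyi
          · exact lt_of_le_of_lt h5 hdyi
      _ < ε := by linarith
  set R : ℕ → ℕ := fun m => (m+1) * D (m+1) + 1 with hRdef
  set L : ℕ → ℕ := fun m => R m * D m with hLdef
  have hL1 : ∀ m, 1 ≤ L m := fun m => Nat.mul_pos (Nat.succ_pos _) (hD m)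
  set T : ℕ → ℕ := fun m => ∑ j ∈ Finset.range m, L j with hTdef
  have hTsucc : ∀ m, T (m+1) = T m + L m := fun m => Finset.sum_range_succ _ _
  have hTmono : Monotone T := fun a c hac =>
    Finset.sum_le_sum_of_subset (Finset.range_subset_range.2 hac)
  have hTm : ∀ m, m ≤ T m := by
    intro m
    calc m = ∑ _j ∈ Finset.range m, 1 := by simp
      _ ≤ T m := Finset.sum_le_sum fun j _ => hL1 j
  have hTDm : ∀ m, 1 ≤ m → m * D m ≤ T m := by
    intro m hm
    obtain ⟨m', rfl⟩ : ∃ m', m = m' + 1 := ⟨m - 1, by omega⟩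
    calc (m'+1) * D (m'+1) ≤ R m' := Nat.le_succ _
      _ ≤ R m' * D m' := Nat.le_mul_of_pos_right _ (hD m')
      _ = L m' := rfl
      _ ≤ T (m'+1) := by rw [hTsucc]; omega
  set b : ℕ → ℕ := fun n => Nat.findGreatest (fun m => T m ≤ n) n with hbdef
  have hTb : ∀ n, T (b n) ≤ n := by
    intro n
    have h0 : T 0 ≤ n := by rw [hTdef]; simp
    exact Nat.findGreatest_spec (P := fun m => T m ≤ n) (m := 0) (n := n) (Nat.zero_le n) h0
  have hbTn : ∀ n, n < T (b n + 1) := by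
    intro n
    by_contra h
    push_neg at h
    have h1 : b n + 1 ≤ n := le_trans (hTm _) h
    have h2 : b n + 1 ≤ b n := Nat.le_findGreatest h1 h
    omega
  have hbrange : ∀ m k, T m ≤ k → k < T (m+1) → b k = m := by
    intro m k h1 h2
    have h3 : m ≤ b k := Nat.le_findGreatest (le_trans (hTm m) h1) h1
    have h4 : b k < m + 1 := by
      by_contra h
      push_neg at h
      have h5 := le_trans (hTmono h) (hTb k)
      omega
    omega
  set seq : ℕ → StrongDual ℝ E := fun n => P (b n) ⟨(n - T (b n)) % D (b n), Nat.mod_lt _ (hD _)⟩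
    with hseq
  refine ⟨seq, fun n => hPext _ _, ?_⟩
  intro y
  set G : ℕ → ℕ → ℝ := fun m o => P m ⟨o % D m, Nat.mod_lt _ (hD m)⟩ y with hGdef
  have hGper : ∀ m o, G m o = G m (o % D m) := by
    intro m o
    have hidx : (⟨o % D m, Nat.mod_lt _ (hD m)⟩ : Fin (D m))
        = ⟨o % D m % D m, Nat.mod_lt _ (hD m)⟩ :=
      Fin.ext (Nat.mod_mod_of_dvd o dvd_rfl).symm
    exact congrArg (fun j : Fin (D m) => P m j y) hidx
  have hGbound : ∀ m o, |G m o| ≤ ‖y‖ := fun m o => hPy _ _ y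
  have hGper_sum : ∀ m, ∑ i ∈ Finset.range (D m), G m i = (D m : ℝ) * avg m y := by
    intro m
    have h1 : ∑ i ∈ Finset.range (D m), G m i = ∑ j : Fin (D m), P m j y := by
      rw [← Fin.sum_univ_eq_sum_range (fun i => G m i) (D m)]
      refine Finset.sum_congr rfl fun j _ => ?_
      have hidx : (⟨(j : ℕ) % D m, Nat.mod_lt _ (hD m)⟩ : Fin (D m)) = j :=
        Fin.ext (Nat.mod_eq_of_lt j.isLt)
      exact congrArg (fun t : Fin (D m) => P m t y) hidx
    rw [h1, havg_apply, ← mul_assoc, mul_inv_cancel₀ (hDR m).ne', one_mul]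
  have hseqy : ∀ n, seq n y = G (b n) (n - T (b n)) := fun n => rfl
  have hblock : ∀ m, ∑ k ∈ Finset.range (T m), seq k y
      = ∑ j ∈ Finset.range m, (L j : ℝ) * avg j y := by
    intro m
    induction m with
    | zero => simp [hTdef]
    | succ m ih =>
      rw [hTsucc, ← Finset.sum_range_add_sum_Ico _ (Nat.le_add_right (T m) (L m)), ih,
        Finset.sum_range_succ]
      congr 1
      rw [Finset.sum_Ico_eq_sum_range]
      have h1 : ∀ i ∈ Finset.range (T m + L m - T m), (fun k => seq k y) (T m + i) = G m i := by
        intro i hi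
        have hi' : i < L m := by
          simp only [Nat.add_sub_cancel_left] at hi
          exact Finset.mem_range.1 hi
        have hb : b (T m + i) = m :=
          hbrange m _ (Nat.le_add_right _ _) (by rw [hTsucc]; omega)
        show seq (T m + i) y = G m i
        rw [hseqy, hb, Nat.add_sub_cancel_left]
      rw [Finset.sum_congr rfl h1]
      simp only [Nat.add_sub_cancel_left]
      rw [show L m = R m * D m from rfl,
        sum_range_mul_of_periodic (D m) (G m) (hGper m) (R m), hGper_sum]
      push_cast
      ring
  rw [Metric.tendsto_atTop]
  intro ε hε
  set X : ℝ := ‖y‖ + 1 with hX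
  have hX0 : 0 < X := by positivity
  have hyX : ‖y‖ ≤ X := by rw [hX]; linarith
  have havgX : ∀ j, |avg j y - f y| ≤ 2 * X := by
    intro j
    have h1 := havgy j y
    have h2 := hfy y
    have h3 : |avg j y - f y| ≤ |avg j y| + |f y| := abs_sub _ _
    nlinarith
  obtain ⟨m1, hm1⟩ := (Metric.tendsto_atTop.1 (havgtend y)) (ε/4) (by positivity)
  obtain ⟨m2, hm2⟩ := exists_nat_gt (8 * X / ε)
  set m0 := max m1 m2 with hm0
  have hm0a : ∀ j, m0 ≤ j → |avg j y - f y| < ε/4 := by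
    intro j hj
    have := hm1 j (le_trans (le_max_left _ _) hj)
    rwa [Real.dist_eq] at this
  have hm0b : 2 * X / ((m0:ℝ) + 1) < ε/4 := by
    have h1 : (8 : ℝ) * X / ε < (m0:ℝ) + 1 := by
      refine hm2.trans_le ?_
      have : (m2:ℝ) ≤ (m0:ℝ) := Nat.cast_le.2 (le_max_right m1 m2)
      linarith
    have h2 : 8 * X < ((m0:ℝ) + 1) * ε := (div_lt_iff₀ hε).1 h1
    rw [div_lt_iff₀ (by positivity : (0:ℝ) < (m0:ℝ) + 1)]
    nlinarith
  obtain ⟨N2, hN2⟩ := exists_nat_gt (8 * (T (m0+1) : ℝ) * X / ε)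
  refine ⟨max (T (m0+1)) N2 + 1, fun N hN => ?_⟩
  have hN1 : 1 ≤ N := le_trans (Nat.le_add_left 1 _) hN
  have hNT : T (m0+1) ≤ N := by
    have := le_max_left (T (m0+1)) N2
    omega
  have hNN2 : (N2 : ℝ) < N := by
    have h1 : N2 < N := by
      have := le_max_right (T (m0+1)) N2
      omega
    exact_mod_cast h1
  have hNR : (0:ℝ) < N := by exact_mod_cast hN1
  set m := b N with hm
  have hTmN : T m ≤ N := hTb N
  have hNTm1 : N < T (m+1) := hbTn N
  have hm_ge : m0 + 1 ≤ m := by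
    by_contra h
    push_neg at h
    have h1 : m + 1 ≤ m0 + 1 := by omega
    have := hTmono h1
    omega
  have hm1le : 1 ≤ m := by omega
  set s := N - T m with hs
  have hNs : N = T m + s := by omega
  have hsL : s < L m := by
    have := hTsucc m
    omega
  have hsum : ∑ k ∈ Finset.range N, seq k y
      = ∑ j ∈ Finset.range m, (L j : ℝ) * avg j y + ∑ o ∈ Finset.range s, G m o := by
    calc ∑ k ∈ Finset.range N, seq k y
        = ∑ k ∈ Finset.range (T m), seq k y + ∑ k ∈ Finset.Ico (T m) N, seq k y :=
          (Finset.sum_range_add_sum_Ico _ hTmN).symm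
      _ = _ := by
          rw [hblock m, Finset.sum_Ico_eq_sum_range]
          congr 1
          refine Finset.sum_congr ?_ fun i hi => ?_
          · first
            | rfl
            | (congr 1; omega)
          · have hi' : i < s := by
              have := Finset.mem_range.1 hi
              omega
            have hb : b (T m + i) = m :=
              hbrange m _ (Nat.le_add_right _ _) (by omega)
            show seq (T m + i) y = G m i
            rw [hseqy, hb, Nat.add_sub_cancel_left]
  have key : |∑ k ∈ Finset.range N, seq k y - N * f y| < N * ε := by
    have e1 : ∑ k ∈ Finset.range N, seq k y - N * f y
        = (∑ j ∈ Finset.range m, (L j : ℝ) * (avg j y - f y))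
          + (∑ o ∈ Finset.range s, G m o - s * f y) := by
      rw [hsum]
      have hNcast : (N:ℝ) = (T m : ℝ) + (s : ℝ) := by exact_mod_cast hNs
      have hTmcast : (T m : ℝ) = ∑ j ∈ Finset.range m, (L j : ℝ) := by
        rw [hTdef]
        push_cast
        rfl
      have h2 : ∑ j ∈ Finset.range m, (L j : ℝ) * (avg j y - f y)
          = ∑ j ∈ Finset.range m, (L j : ℝ) * avg j y
            - (∑ j ∈ Finset.range m, (L j:ℝ)) * f y := by
        rw [Finset.sum_mul, ← Finset.sum_sub_distrib]
        exact Finset.sum_congr rfl fun j _ => by ring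
      rw [hNcast, hTmcast, h2]
      ring
    rw [e1]
    have hpart : |∑ o ∈ Finset.range s, G m o - s * f y|
        ≤ (s:ℝ) * |avg m y - f y| + 2 * D m * ‖y‖ := by
      have h3 := partial_block_est (D m) (hD m) (G m) (hGper m) (hGbound m) (f y) (hfy y) s
      have h4 : (D m:ℝ)⁻¹ * ∑ i ∈ Finset.range (D m), G m i = avg m y := by
        rw [hGper_sum, ← mul_assoc, inv_mul_cancel₀ (hDR m).ne', one_mul]
      rwa [h4] at h3
    have hA : |∑ j ∈ Finset.range m, (L j : ℝ) * (avg j y - f y)|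
        ≤ (T (m0+1) : ℝ) * (2*X) + (N:ℝ) * (ε/4) := by
      calc |∑ j ∈ Finset.range m, (L j:ℝ) * (avg j y - f y)|
          ≤ ∑ j ∈ Finset.range m, (L j:ℝ) * |avg j y - f y| := by
            refine (Finset.abs_sum_le_sum_abs _ _).trans
              (Finset.sum_le_sum fun j _ => le_of_eq ?_)
            rw [abs_mul, abs_of_nonneg (by positivity : (0:ℝ) ≤ (L j:ℝ))]
        _ = ∑ j ∈ Finset.range (m0+1), (L j:ℝ) * |avg j y - f y|
            + ∑ j ∈ Finset.Ico (m0+1) m, (L j:ℝ) * |avg j y - f y| :=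
            (Finset.sum_range_add_sum_Ico _ hm_ge).symm
        _ ≤ ∑ j ∈ Finset.range (m0+1), (L j:ℝ) * (2*X)
            + ∑ j ∈ Finset.Ico (m0+1) m, (L j:ℝ) * (ε/4) := by
            refine add_le_add (Finset.sum_le_sum fun j _ => ?_)
              (Finset.sum_le_sum fun j hj => ?_)
            · exact mul_le_mul_of_nonneg_left (havgX j) (by positivity)
            · have hj' : m0 ≤ j := by
                have := (Finset.mem_Ico.1 hj).1
                omega
              exact mul_le_mul_of_nonneg_left (le_of_lt (hm0a j hj')) (by positivity)
        _ ≤ (T (m0+1):ℝ) * (2*X) + (N:ℝ)*(ε/4) := by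
            refine add_le_add (le_of_eq ?_) ?_
            · rw [← Finset.sum_mul]
              congr 1
              rw [hTdef]
              push_cast
              rfl
            · rw [← Finset.sum_mul]
              refine mul_le_mul_of_nonneg_right ?_ (by positivity)
              have h6 : (∑ j ∈ Finset.Ico (m0+1) m, L j) ≤ T m := by
                have h7 := Finset.sum_range_add_sum_Ico L hm_ge
                calc (∑ j ∈ Finset.Ico (m0+1) m, L j)
                    ≤ ∑ j ∈ Finset.range (m0+1), L j
                      + ∑ j ∈ Finset.Ico (m0+1) m, L j := Nat.le_add_left _ _
                  _ = ∑ j ∈ Finset.range m, L j := h7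
                  _ = T m := by simp only [hTdef]
              have h5 : (∑ j ∈ Finset.Ico (m0+1) m, L j) ≤ N := le_trans h6 hTmN
              calc (∑ j ∈ Finset.Ico (m0+1) m, (L j:ℝ))
                  = ((∑ j ∈ Finset.Ico (m0+1) m, L j : ℕ) : ℝ) := by push_cast; rfl
                _ ≤ (N:ℝ) := Nat.cast_le.2 h5
    have hsN : (s:ℝ) ≤ N := by
      have h8 : s ≤ N := by omega
      exact_mod_cast h8
    have havgm : |avg m y - f y| < ε/4 := hm0a m (by omega)
    have hDmN : 2 * (D m : ℝ) * ‖y‖ ≤ (N:ℝ) * (ε/4) := by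
      have h7 : (m : ℝ) * (D m : ℝ) ≤ (N : ℝ) := by
        have h8 : m * D m ≤ N := le_trans (hTDm m hm1le) hTmN
        exact_mod_cast h8
      have h9 : (D m : ℝ) ≤ (N:ℝ) / (m:ℝ) := by
        rw [le_div_iff₀ (by exact_mod_cast hm1le : (0:ℝ) < (m:ℝ))]
        linarith [h7]
      have h10 : (N:ℝ) / (m:ℝ) ≤ (N:ℝ) / ((m0:ℝ)+1) := by
        apply div_le_div_of_nonneg_left hNR.le (by positivity)
        exact_mod_cast hm_ge
      have h9' : (D m:ℝ) ≤ (N:ℝ)/((m0:ℝ)+1) := h9.trans h10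
      have h11 : 2 * X * ((N:ℝ)/((m0:ℝ)+1)) ≤ (N:ℝ) * (ε/4) := by
        calc 2 * X * ((N:ℝ)/((m0:ℝ)+1)) = (N:ℝ) * (2 * X / ((m0:ℝ)+1)) := by ring
          _ ≤ (N:ℝ) * (ε/4) := mul_le_mul_of_nonneg_left hm0b.le hNR.le
      calc 2 * (D m : ℝ) * ‖y‖ ≤ 2 * (D m:ℝ) * X := by nlinarith [hDR m, hyX]
        _ = 2 * X * (D m:ℝ) := by ring
        _ ≤ 2 * X * ((N:ℝ)/((m0:ℝ)+1)) :=
            mul_le_mul_of_nonneg_left h9' (by positivity)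
        _ ≤ (N:ℝ) * (ε/4) := h11
    have hT2X : (T (m0+1) : ℝ) * (2*X) < (N:ℝ) * (ε/4) := by
      have h13 : 8 * (T (m0+1) : ℝ) * X / ε < (N:ℝ) := hN2.trans hNN2
      have h14 : 8 * (T (m0+1) : ℝ) * X < (N:ℝ) * ε := (div_lt_iff₀ hε).1 h13
      nlinarith
    calc |∑ j ∈ Finset.range m, (L j : ℝ) * (avg j y - f y)
          + (∑ o ∈ Finset.range s, G m o - s * f y)|
        ≤ |∑ j ∈ Finset.range m, (L j : ℝ) * (avg j y - f y)|
          + |∑ o ∈ Finset.range s, G m o - s * f y| := abs_add_le _ _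
      _ ≤ ((T (m0+1) : ℝ) * (2*X) + (N:ℝ) * (ε/4))
          + ((s:ℝ) * |avg m y - f y| + 2 * D m * ‖y‖) := add_le_add hA hpart
      _ < ((N:ℝ) * (ε/4) + (N:ℝ) * (ε/4)) + ((N:ℝ) * (ε/4) + (N:ℝ) * (ε/4)) := by
          have h15 : (s:ℝ) * |avg m y - f y| ≤ (N:ℝ) * (ε/4) := by
            calc (s:ℝ) * |avg m y - f y| ≤ (N:ℝ) * |avg m y - f y| :=
                  mul_le_mul_of_nonneg_right hsN (abs_nonneg _)
              _ ≤ (N:ℝ) * (ε/4) := mul_le_mul_of_nonneg_left havgm.le hNR.le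
          linarith [hDmN, hT2X]
      _ = N * ε := by ring
  rw [Real.dist_eq]
  have e3 : (N:ℝ)⁻¹ * (∑ k ∈ Finset.range N, seq k y - N * f y)
      = (N:ℝ)⁻¹ * ∑ k ∈ Finset.range N, seq k y - f y := by
    rw [mul_sub, ← mul_assoc, inv_mul_cancel₀ hNR.ne', one_mul]
  have e2 : |(N:ℝ)⁻¹ * ∑ k ∈ Finset.range N, seq k y - f y|
      = (N:ℝ)⁻¹ * |∑ k ∈ Finset.range N, seq k y - N * f y| := by
    rw [← e3, abs_mul, abs_of_nonneg (inv_nonneg.2 hNR.le)]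
  rw [e2]
  calc (N:ℝ)⁻¹ * |∑ k ∈ Finset.range N, seq k y - N * f y|
      < (N:ℝ)⁻¹ * (N * ε) := mul_lt_mul_of_pos_left key (by positivity)
    _ = ε := by field_simp
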